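/- For all b, c ∈ k, the right Λ-module M(1,b,c)* = Hom_Λ(M(1,b,c), Λ) is isomorphic to M′((ω′)²(1,b,c)), where ω′(a,b,c) = (a, q⁻¹b, −((a+q⁻¹b)/a)·c) (which is defined whenever the first coordinate a is nonzero, hence (ω′)²(1,b,c) is defined for all b,c). In particular, M(1,b,c)* is again a 3-dimensional local right Λ-module; for b = −q one has M(1,−q,c)* ≅ M′(1,−q⁻¹,0) for every c ∈ k, and for b = −q² one has M(1,−q²,c)* ≅ M′(1,−1,0) for every c ∈ k. -/

import Mathlib

open CategoryTheory Limits Opposite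

/-- The algebra `Λ = Λ(q)` of Ringel–Zhang: a `k`-algebra with distinguished elements
`x, y, z` satisfying the defining relations
`x² = y² = z² = 0`, `yz = 0`, `xy + q·yx = 0`, `xz = zx`, `zy = zx`,
and admitting the `k`-basis `{1, x, y, z, yx, zx}`.
Any such algebra is canonically isomorphic to the quotient of the free algebra
`k⟨x,y,z⟩` by the two-sided ideal generated by these relations. -/
structure LambdaAlg (k : Type) [Field k] (q : k) (Λ : Type) [Ring Λ] [Algebra k Λ] :
    Type where
  x : Λ
  y : Λ
  z : Λ
  hxx : x * x = 0
  hyy : y * y = 0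
  hzz : z * z = 0
  hyz : y * z = 0
  hxy : x * y + q • (y * x) = 0
  hxz : x * z - z * x = 0
  hzy : z * y - z * x = 0
  basis : Module.Basis (Fin 6) k Λ
  hb0 : basis 0 = 1
  hb1 : basis 1 = x
  hb2 : basis 2 = y
  hb3 : basis 3 = z
  hb4 : basis 4 = y * x
  hb5 : basis 5 = z * x

namespace LambdaAlg

variable {k : Type} [Field k] {q : k} {Λ : Type} [Ring Λ] [Algebra k Λ]

/-- The element `ax + by + cz` of `Λ`. -/
def w (D : LambdaAlg k q Λ) (a b c : k) : Λ := a • D.x + b • D.y + c • D.z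

/-- The left ideal `U(a,b,c) = Λ(ax+by+cz) + Λ·yx + Λ·zx` of `Λ`. -/
def U (D : LambdaAlg k q Λ) (a b c : k) : Submodule Λ Λ :=
  Submodule.span Λ {D.w a b c, D.y * D.x, D.z * D.x}

/-- The left `Λ`-module `M(a,b,c) = Λ/U(a,b,c)`. -/
abbrev M (D : LambdaAlg k q Λ) (a b c : k) : Type := Λ ⧸ D.U a b c

/-- The right ideal `U′(a,b,c) = (ax+by+cz)Λ + yx·Λ + zx·Λ` of `Λ`,
viewed as a `Λᵐᵒᵖ`-submodule of `Λ`. -/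
def U' (D : LambdaAlg k q Λ) (a b c : k) : Submodule Λᵐᵒᵖ Λ :=
  Submodule.span Λᵐᵒᵖ {D.w a b c, D.y * D.x, D.z * D.x}

/-- The right `Λ`-module `M′(a,b,c) = Λ/U′(a,b,c)` (a module over `Λᵐᵒᵖ`). -/
abbrev M' (D : LambdaAlg k q Λ) (a b c : k) : Type := Λ ⧸ D.U' a b c

/-- The `k`-subspace `{m ∈ M : x·m = y·m = z·m = 0}` of a left `Λ`-module `M`;
since `x, y, z` generate `rad Λ` and every simple `Λ`-module is isomorphic to `k`,
this is the socle of `M`. -/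
def ann (D : LambdaAlg k q Λ) (M : Type) [AddCommGroup M] [Module k M] [Module Λ M]
    [IsScalarTower k Λ M] : Submodule k M where
  carrier := {m | D.x • m = 0 ∧ D.y • m = 0 ∧ D.z • m = 0}
  add_mem' := by
    rintro a b ⟨h1, h2, h3⟩ ⟨g1, g2, g3⟩
    simp [smul_add, h1, h2, h3, g1, g2, g3]
  zero_mem' := by simp
  smul_mem' := by
    rintro a m ⟨h1, h2, h3⟩
    refine ⟨?_, ?_, ?_⟩ <;> rw [smul_comm] <;> simp [h1, h2, h3]

/-- The submodule `(rad Λ)·M = x·M + y·M + z·M` of a left `Λ`-module `M`. -/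
def radM (D : LambdaAlg k q Λ) (M : Type) [AddCommGroup M] [Module Λ M] :
    Submodule Λ M :=
  Submodule.span Λ
    (Set.range (fun m : M => D.x • m) ∪ Set.range (fun m : M => D.y • m) ∪
      Set.range (fun m : M => D.z • m))

end LambdaAlg

/-- A module is indecomposable if it is nonzero and is not the direct sum of two
nonzero submodules. -/
def IsIndecomposable (R : Type) [Ring R] (M : Type) [AddCommGroup M] [Module R M] :
    Prop :=
  Nontrivial M ∧
    ∀ N₁ N₂ : Submodule R M, N₁ ⊓ N₂ = ⊥ → N₁ ⊔ N₂ = ⊤ → N₁ = ⊥ ∨ N₂ = ⊥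

/-- A module is torsionless if it admits an injective linear map into a finite free
module. -/
def IsTorsionless (R : Type) [Ring R] (M : Type) [AddCommGroup M] [Module R M] : Prop :=
  ∃ (n : ℕ) (f : M →ₗ[R] (Fin n → R)), Function.Injective f

/-- The canonical evaluation map `M → M** = Hom_{Λᵒᵖ}(Hom_Λ(M, Λ), Λ)`,
sending `m` to `f ↦ f m`. -/
def evalMap (Λ : Type) [Ring Λ] (M : Type) [AddCommGroup M] [Module Λ M] :
    M → ((M →ₗ[Λ] Λ) →ₗ[Λᵐᵒᵖ] Λ) := fun m =>
  { toFun := fun f => f m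
    map_add' := fun _ _ => rfl
    map_smul' := fun _ _ => rfl }

/-- The transformation `ω′(a,b,c) = (a, q⁻¹b, −((a+q⁻¹b)/a)·c)` on triples. -/
def omegaPrime {k : Type} [Field k] (q : k) (t : k × k × k) : k × k × k :=
  (t.1, q⁻¹ * t.2.1, -((t.1 + q⁻¹ * t.2.1) / t.1) * t.2.2)
namespace LambdaAlg

variable {k : Type} [Field k] {q : k} {Λ : Type} [Ring Λ] [Algebra k Λ]
variable (D : LambdaAlg k q Λ)

lemma rxy : D.x * D.y = -(q • (D.y * D.x)) := eq_neg_of_add_eq_zero_left D.hxy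
lemma rxz : D.x * D.z = D.z * D.x := sub_eq_zero.mp D.hxz
lemma rzy : D.z * D.y = D.z * D.x := sub_eq_zero.mp D.hzy

lemma axx (m : Λ) : D.x * (D.x * m) = 0 := by rw [← mul_assoc, D.hxx, zero_mul]
lemma ayy (m : Λ) : D.y * (D.y * m) = 0 := by rw [← mul_assoc, D.hyy, zero_mul]
lemma azz (m : Λ) : D.z * (D.z * m) = 0 := by rw [← mul_assoc, D.hzz, zero_mul]
lemma ayz (m : Λ) : D.y * (D.z * m) = 0 := by rw [← mul_assoc, D.hyz, zero_mul]
lemma axy (m : Λ) : D.x * (D.y * m) = -(q • (D.y * (D.x * m))) := by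
  rw [← mul_assoc, D.rxy, neg_mul, smul_mul_assoc, mul_assoc]
lemma axz (m : Λ) : D.x * (D.z * m) = D.z * (D.x * m) := by
  rw [← mul_assoc, D.rxz, mul_assoc]
lemma azy (m : Λ) : D.z * (D.y * m) = D.z * (D.x * m) := by
  rw [← mul_assoc, D.rzy, mul_assoc]

lemma indep {a0 a1 a2 a3 a4 a5 : k}
    (h : a0 • (1:Λ) + a1 • D.x + a2 • D.y + a3 • D.z + a4 • (D.y * D.x)
        + a5 • (D.z * D.x) = 0) :
    a0 = 0 ∧ a1 = 0 ∧ a2 = 0 ∧ a3 = 0 ∧ a4 = 0 ∧ a5 = 0 := by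
  have hli := Fintype.linearIndependent_iff.mp D.basis.linearIndependent
      ![a0, a1, a2, a3, a4, a5] ?_
  · exact ⟨hli 0, hli 1, hli 2, hli 3, hli 4, hli 5⟩
  · rw [Fin.sum_univ_six]
    simpa [D.hb0, D.hb1, D.hb2, D.hb3, D.hb4, D.hb5] using h

lemma expand (m : Λ) :
    m = D.basis.repr m 0 • (1:Λ) + D.basis.repr m 1 • D.x + D.basis.repr m 2 • D.y
        + D.basis.repr m 3 • D.z + D.basis.repr m 4 • (D.y * D.x)
        + D.basis.repr m 5 • (D.z * D.x) := by
  conv_lhs => rw [← D.basis.sum_repr m]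
  rw [Fin.sum_univ_six, D.hb0, D.hb1, D.hb2, D.hb3, D.hb4, D.hb5]

end LambdaAlg
namespace LambdaAlg

variable {k : Type} [Field k] {q : k} {Λ : Type} [Ring Λ] [Algebra k Λ]

/-- The `Λ`-linear map `M(a,b,c) → Λ` determined by right multiplication with `μ`,
when `μ` is annihilated by the generators of `U(a,b,c)`. -/
def homOf (D : LambdaAlg k q Λ) (a b c : k) (μ : Λ) (h1 : D.w a b c * μ = 0)
    (h2 : D.y * D.x * μ = 0) (h3 : D.z * D.x * μ = 0) : D.M a b c →ₗ[Λ] Λ :=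
  (D.U a b c).liftQ (LinearMap.toSpanSingleton Λ Λ μ) (by
    rw [LambdaAlg.U, Submodule.span_le]
    rintro t ht
    simp only [Set.mem_insert_iff, Set.mem_singleton_iff] at ht
    rcases ht with rfl | rfl | rfl <;>
      simp only [SetLike.mem_coe, LinearMap.mem_ker, LinearMap.toSpanSingleton_apply,
        smul_eq_mul, h1, h2, h3])

@[simp] lemma homOf_apply (D : LambdaAlg k q Λ) (a b c : k) (μ : Λ)
    (h1 : D.w a b c * μ = 0) (h2 : D.y * D.x * μ = 0) (h3 : D.z * D.x * μ = 0)
    (lam : Λ) :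
    homOf D a b c μ h1 h2 h3 (Submodule.Quotient.mk lam) = lam * μ := by
  simp [homOf, Submodule.liftQ_apply, LinearMap.toSpanSingleton_apply, smul_eq_mul]

theorem master (D : LambdaAlg k q Λ) (hq : q ≠ 0) (b c b₂ c₂ : k)
    (hb₂ : b₂ = q⁻¹ * (q⁻¹ * b))
    (hc₂ : c₂ = -(1 + q⁻¹ * (q⁻¹ * b)) * (-(1 + q⁻¹ * b) * c)) :
    Nonempty ((D.M 1 b c →ₗ[Λ] Λ) ≃ₗ[Λᵐᵒᵖ] D.M' 1 b₂ c₂) ∧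
      Module.finrank k (D.M 1 b c →ₗ[Λ] Λ) = 3 := by
  obtain ⟨b₁, hb₁⟩ : ∃ t : k, b = q * t := ⟨q⁻¹ * b, by field_simp⟩
  obtain ⟨c₁, hc₁⟩ : ∃ t : k, t = -(c + b₁ * c) := ⟨_, rfl⟩
  have hb₂q : q * b₂ = b₁ := by
    rw [hb₂, hb₁]; field_simp
  have hc₂' : c₂ = -(c₁ + b₂ * c₁) := by
    rw [hc₂, hc₁, hb₁]; field_simp; linear_combination (-(b₁ * c) - c) * hb₂q
  clear hb₂ hc₂
  set v : Λ := D.x + b₁ • D.y + c₁ • D.z with hv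
  have hwdef : D.w 1 b c = D.x + b • D.y + c • D.z := by simp [LambdaAlg.w]
  have hw₂def : D.w 1 b₂ c₂ = D.x + b₂ • D.y + c₂ • D.z := by simp [LambdaAlg.w]
  have scal : ∀ u1 u2 : Λ, u1 = u2 → u1 = u2 := fun _ _ h => h
  -- product computations
  have hwv : D.w 1 b c * v = 0 := by
    rw [hwdef, hv]
    simp only [mul_add, add_mul, mul_smul_comm, smul_mul_assoc, smul_smul, D.hxx, D.hyy,
      D.hzz, D.hyz, D.rxy, D.rxz, D.rzy, smul_zero, mul_zero, zero_mul, smul_neg,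
      add_zero, zero_add]
    match_scalars <;>
      (first
        | ring1
        | linear_combination hb₁
        | linear_combination hc₁
        | linear_combination -hb₂q
        | linear_combination hc₂')
  have hvw₂ : v * D.w 1 b₂ c₂ = 0 := by
    rw [hw₂def, hv]
    simp only [mul_add, add_mul, mul_smul_comm, smul_mul_assoc, smul_smul, D.hxx, D.hyy,
      D.hzz, D.hyz, D.rxy, D.rxz, D.rzy, smul_zero, mul_zero, zero_mul, smul_neg,
      add_zero, zero_add]
    match_scalars <;>
      (first
        | ring1
        | linear_combination hb₁
        | linear_combination hc₁
        | linear_combination -hb₂q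
        | linear_combination hc₂')
  have hyx_v : D.y * D.x * v = 0 := by
    rw [hv]
    simp only [mul_assoc, mul_add, add_mul, mul_smul_comm, smul_mul_assoc, smul_smul,
      D.axx, D.ayy, D.azz, D.ayz, D.axy, D.axz, D.azy, D.hxx, D.hyy, D.hzz, D.hyz,
      D.rxy, D.rxz, D.rzy, smul_zero, mul_zero, zero_mul, smul_neg, mul_neg,
      add_zero, zero_add, neg_zero]
  have hzx_v : D.z * D.x * v = 0 := by
    rw [hv]
    simp only [mul_assoc, mul_add, add_mul, mul_smul_comm, smul_mul_assoc, smul_smul,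
      D.axx, D.ayy, D.azz, D.ayz, D.axy, D.axz, D.azy, D.hxx, D.hyy, D.hzz, D.hyz,
      D.rxy, D.rxz, D.rzy, smul_zero, mul_zero, zero_mul, smul_neg, mul_neg,
      add_zero, zero_add, neg_zero]
  have hv_yx : v * (D.y * D.x) = 0 := by
    rw [hv]
    simp only [mul_assoc, mul_add, add_mul, mul_smul_comm, smul_mul_assoc, smul_smul,
      D.axx, D.ayy, D.azz, D.ayz, D.axy, D.axz, D.azy, D.hxx, D.hyy, D.hzz, D.hyz,
      D.rxy, D.rxz, D.rzy, smul_zero, mul_zero, zero_mul, smul_neg, mul_neg,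
      add_zero, zero_add, neg_zero]
  have hv_zx : v * (D.z * D.x) = 0 := by
    rw [hv]
    simp only [mul_assoc, mul_add, add_mul, mul_smul_comm, smul_mul_assoc, smul_smul,
      D.axx, D.ayy, D.azz, D.ayz, D.axy, D.axz, D.azy, D.hxx, D.hyy, D.hzz, D.hyz,
      D.rxy, D.rxz, D.rzy, smul_zero, mul_zero, zero_mul, smul_neg, mul_neg,
      add_zero, zero_add, neg_zero]
  have hw_yx : D.w 1 b c * (D.y * D.x) = 0 := by
    rw [hwdef]
    simp only [mul_assoc, mul_add, add_mul, mul_smul_comm, smul_mul_assoc, smul_smul,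
      D.axx, D.ayy, D.azz, D.ayz, D.axy, D.axz, D.azy, D.hxx, D.hyy, D.hzz, D.hyz,
      D.rxy, D.rxz, D.rzy, smul_zero, mul_zero, zero_mul, smul_neg, mul_neg,
      add_zero, zero_add, neg_zero]
  have hw_zx : D.w 1 b c * (D.z * D.x) = 0 := by
    rw [hwdef]
    simp only [mul_assoc, mul_add, add_mul, mul_smul_comm, smul_mul_assoc, smul_smul,
      D.axx, D.ayy, D.azz, D.ayz, D.axy, D.axz, D.azy, D.hxx, D.hyy, D.hzz, D.hyz,
      D.rxy, D.rxz, D.rzy, smul_zero, mul_zero, zero_mul, smul_neg, mul_neg,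
      add_zero, zero_add, neg_zero]
  have hyx_yx : D.y * D.x * (D.y * D.x) = 0 := by
    simp only [mul_assoc, mul_add, add_mul, mul_smul_comm, smul_mul_assoc, smul_smul,
      D.axx, D.ayy, D.azz, D.ayz, D.axy, D.axz, D.azy, D.hxx, D.hyy, D.hzz, D.hyz,
      D.rxy, D.rxz, D.rzy, smul_zero, mul_zero, zero_mul, smul_neg, mul_neg,
      add_zero, zero_add, neg_zero]
  have hyx_zx : D.y * D.x * (D.z * D.x) = 0 := by
    simp only [mul_assoc, mul_add, add_mul, mul_smul_comm, smul_mul_assoc, smul_smul,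
      D.axx, D.ayy, D.azz, D.ayz, D.axy, D.axz, D.azy, D.hxx, D.hyy, D.hzz, D.hyz,
      D.rxy, D.rxz, D.rzy, smul_zero, mul_zero, zero_mul, smul_neg, mul_neg,
      add_zero, zero_add, neg_zero]
  have hzx_yx : D.z * D.x * (D.y * D.x) = 0 := by
    simp only [mul_assoc, mul_add, add_mul, mul_smul_comm, smul_mul_assoc, smul_smul,
      D.axx, D.ayy, D.azz, D.ayz, D.axy, D.axz, D.azy, D.hxx, D.hyy, D.hzz, D.hyz,
      D.rxy, D.rxz, D.rzy, smul_zero, mul_zero, zero_mul, smul_neg, mul_neg,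
      add_zero, zero_add, neg_zero]
  have hzx_zx : D.z * D.x * (D.z * D.x) = 0 := by
    simp only [mul_assoc, mul_add, add_mul, mul_smul_comm, smul_mul_assoc, smul_smul,
      D.axx, D.ayy, D.azz, D.ayz, D.axy, D.axz, D.azy, D.hxx, D.hyy, D.hzz, D.hyz,
      D.rxy, D.rxz, D.rzy, smul_zero, mul_zero, zero_mul, smul_neg, mul_neg,
      add_zero, zero_add, neg_zero]
  have hvX : v * D.x = b₁ • (D.y * D.x) + c₁ • (D.z * D.x) := by
    rw [hv]
    simp only [add_mul, smul_mul_assoc, D.hxx, zero_add]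
  have hvY : v * D.y = -(q • (D.y * D.x)) + c₁ • (D.z * D.x) := by
    rw [hv]
    simp only [add_mul, smul_mul_assoc, D.rxy, D.hyy, D.rzy, smul_zero, add_zero]
  have hvZ : v * D.z = D.z * D.x := by
    rw [hv]
    simp only [add_mul, smul_mul_assoc, D.rxz, D.hyz, D.hzz, smul_zero, add_zero]
  have hwX : D.w 1 b c * D.x = b • (D.y * D.x) + c • (D.z * D.x) := by
    rw [hwdef]; simp only [add_mul, smul_mul_assoc, D.hxx, zero_add]
  have hwY : D.w 1 b c * D.y = -(q • (D.y * D.x)) + c • (D.z * D.x) := by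
    rw [hwdef]
    simp only [add_mul, smul_mul_assoc, D.rxy, D.hyy, D.rzy, smul_zero, add_zero]
  have hwZ : D.w 1 b c * D.z = D.z * D.x := by
    rw [hwdef]
    simp only [add_mul, smul_mul_assoc, D.rxz, D.hyz, D.hzz, smul_zero, add_zero]
  have hyxX : D.y * D.x * D.x = 0 := by rw [mul_assoc, D.hxx, mul_zero]
  have hyxY : D.y * D.x * D.y = 0 := by
    simp only [mul_assoc, mul_add, add_mul, mul_smul_comm, smul_mul_assoc, smul_smul,
      D.axx, D.ayy, D.azz, D.ayz, D.axy, D.axz, D.azy, D.hxx, D.hyy, D.hzz, D.hyz,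
      D.rxy, D.rxz, D.rzy, smul_zero, mul_zero, zero_mul, smul_neg, mul_neg,
      add_zero, zero_add, neg_zero]
  have hyxZ : D.y * D.x * D.z = 0 := by
    simp only [mul_assoc, mul_add, add_mul, mul_smul_comm, smul_mul_assoc, smul_smul,
      D.axx, D.ayy, D.azz, D.ayz, D.axy, D.axz, D.azy, D.hxx, D.hyy, D.hzz, D.hyz,
      D.rxy, D.rxz, D.rzy, smul_zero, mul_zero, zero_mul, smul_neg, mul_neg,
      add_zero, zero_add, neg_zero]
  -- k-scalars act on U' through right multiplication by central elements
  have ksmul_mem : ∀ (r : k) (u : Λ), u ∈ D.U' 1 b₂ c₂ → r • u ∈ D.U' 1 b₂ c₂ := by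
    intro r u hu
    have h : r • u = MulOpposite.op (algebraMap k Λ r) • u := by
      rw [MulOpposite.smul_eq_mul_unop, MulOpposite.unop_op, ← Algebra.commutes,
        ← Algebra.smul_def]
    rw [h]
    exact Submodule.smul_mem _ _ hu
  have hwmem : D.w 1 b₂ c₂ ∈ D.U' 1 b₂ c₂ :=
    Submodule.subset_span (Set.mem_insert _ _)
  have hyxmem : D.y * D.x ∈ D.U' 1 b₂ c₂ :=
    Submodule.subset_span (Set.mem_insert_of_mem _ (Set.mem_insert _ _))
  have hzxmem : D.z * D.x ∈ D.U' 1 b₂ c₂ :=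
    Submodule.subset_span (Set.mem_insert_of_mem _ (Set.mem_insert_of_mem _ rfl))
  -- Lemma A : if v * lam = 0 then lam ∈ U'(1,b₂,c₂)
  have memU' : ∀ lam : Λ, v * lam = 0 → lam ∈ D.U' 1 b₂ c₂ := by
    intro lam h0
    have hex := D.expand lam
    set r0 := D.basis.repr lam 0 with hr0d
    set r1 := D.basis.repr lam 1 with hr1d
    set r2 := D.basis.repr lam 2 with hr2d
    set r3 := D.basis.repr lam 3 with hr3d
    set r4 := D.basis.repr lam 4 with hr4d
    set r5 := D.basis.repr lam 5 with hr5d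
    have hcalc : v * lam = r0 • v + (r1 * b₁ - q * r2) • (D.y * D.x)
        + ((r1 + r2) * c₁ + r3) • (D.z * D.x) := by
      conv_lhs => rw [hex]
      simp only [mul_add, mul_smul_comm, mul_one, hvX, hvY, hvZ, hv_yx, hv_zx,
        smul_zero, add_zero]
      match_scalars <;> ring
    rw [h0] at hcalc
    have hz : r0 • v + (r1 * b₁ - q * r2) • (D.y * D.x)
        + ((r1 + r2) * c₁ + r3) • (D.z * D.x) = 0 := hcalc.symm
    have h0' : (0:k) • (1:Λ) + r0 • D.x + (r0 * b₁) • D.y + (r0 * c₁) • D.z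
        + (r1 * b₁ - q * r2) • (D.y * D.x)
        + ((r1 + r2) * c₁ + r3) • (D.z * D.x) = 0 := by
      rw [← hz, hv]
      module
    obtain ⟨-, e1, e2, e3, e4, e5⟩ := D.indep h0'
    have hr2q : q * r2 = q * (r1 * b₂) := by
      linear_combination -e4 - r1 * hb₂q
    have hr2 : r2 = r1 * b₂ := mul_left_cancel₀ hq hr2q
    have hr3 : r3 = r1 * c₂ := by
      rw [hc₂']
      linear_combination e5 - c₁ * hr2
    have hrep : lam = r1 • D.w 1 b₂ c₂ + r4 • (D.y * D.x) + r5 • (D.z * D.x) := by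
      conv_lhs => rw [hex]
      rw [hw₂def]
      match_scalars
      · linear_combination e1
      · ring
      · linear_combination hr2
      · linear_combination hr3
      · ring
      · ring
    rw [hrep]
    exact add_mem (add_mem (ksmul_mem _ _ hwmem) (ksmul_mem _ _ hyxmem))
      (ksmul_mem _ _ hzxmem)
  -- Lemma B : solutions of the dual equations are combinations of v, yx, zx
  have repform : ∀ lam : Λ, D.w 1 b c * lam = 0 → D.y * D.x * lam = 0 →
      ∃ t1 t4 t5 : k, lam = t1 • v + t4 • (D.y * D.x) + t5 • (D.z * D.x) := by
    intro lam h1 h2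
    have hex := D.expand lam
    set s0 := D.basis.repr lam 0 with hs0d
    set s1 := D.basis.repr lam 1 with hs1d
    set s2 := D.basis.repr lam 2 with hs2d
    set s3 := D.basis.repr lam 3 with hs3d
    set s4 := D.basis.repr lam 4 with hs4d
    set s5 := D.basis.repr lam 5 with hs5d
    have hcy : D.y * D.x * lam = s0 • (D.y * D.x) := by
      conv_lhs => rw [hex]
      simp only [mul_add, mul_smul_comm, mul_one, hyxX, hyxY, hyxZ, hyx_yx, hyx_zx,
        smul_zero, add_zero]
    have hyx0 : s0 • (D.y * D.x) = 0 := by rw [← hcy, h2]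
    have hcomb : (0:k) • (1:Λ) + (0:k) • D.x + (0:k) • D.y + (0:k) • D.z + s0 • (D.y * D.x)
        + (0:k) • (D.z * D.x) = 0 := by
      rw [hyx0]; simp
    obtain ⟨-, -, -, -, hs0, -⟩ := D.indep hcomb
    rw [hs0, zero_smul, zero_add] at hex
    have hcw : D.w 1 b c * lam = (s1 * b - q * s2) • (D.y * D.x)
        + ((s1 + s2) * c + s3) • (D.z * D.x) := by
      conv_lhs => rw [hex]
      simp only [mul_add, mul_smul_comm, hwX, hwY, hwZ, hw_yx, hw_zx, smul_zero,
        add_zero]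
      match_scalars <;> ring
    have hz2 : (s1 * b - q * s2) • (D.y * D.x) + ((s1 + s2) * c + s3) • (D.z * D.x)
        = 0 := by rw [← hcw, h1]
    have hcomb2 : (0:k) • (1:Λ) + (0:k) • D.x + (0:k) • D.y + (0:k) • D.z
        + (s1 * b - q * s2) • (D.y * D.x) + ((s1 + s2) * c + s3) • (D.z * D.x) = 0 := by
      rw [add_assoc _ _ (((s1 + s2) * c + s3) • (D.z * D.x)), hz2]; simp
    obtain ⟨-, -, -, -, e4, e5⟩ := D.indep hcomb2
    have hs2q : q * s2 = q * (s1 * b₁) := by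
      linear_combination -e4 + s1 * hb₁
    have hs2 : s2 = s1 * b₁ := mul_left_cancel₀ hq hs2q
    have hs3 : s3 = s1 * c₁ := by
      linear_combination (-s1) * hc₁ + e5 - c * hs2
    refine ⟨s1, s4, s5, ?_⟩
    conv_lhs => rw [hex]
    rw [hv]
    match_scalars
    · ring
    · linear_combination hs2
    · linear_combination hs3
    · ring
    · ring
  -- every hom is determined by its value at mk 1, which satisfies the constraints
  have evalone : ∀ (f : D.M 1 b c →ₗ[Λ] Λ) (a : Λ),
      f (Submodule.Quotient.mk a) = a * f (Submodule.Quotient.mk 1) := by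
    intro f a
    rw [← smul_eq_mul, ← f.map_smul]
    congr 1
    rw [← Submodule.Quotient.mk_smul, smul_eq_mul, mul_one]
  have constraints : ∀ f : D.M 1 b c →ₗ[Λ] Λ,
      D.w 1 b c * f (Submodule.Quotient.mk 1) = 0 ∧
      D.y * D.x * f (Submodule.Quotient.mk 1) = 0 := by
    intro f
    have hmk : ∀ u : Λ, u ∈ D.U 1 b c → u * f (Submodule.Quotient.mk 1) = 0 := by
      intro u hu
      have h1 : (Submodule.Quotient.mk u : D.M 1 b c) = 0 :=
        (Submodule.Quotient.mk_eq_zero _).mpr hu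
      have h2 : u • (Submodule.Quotient.mk (1 : Λ) : D.M 1 b c)
          = Submodule.Quotient.mk u := by
        rw [← Submodule.Quotient.mk_smul, smul_eq_mul, mul_one]
      calc u * f (Submodule.Quotient.mk 1)
          = u • f (Submodule.Quotient.mk 1) := by rw [smul_eq_mul]
        _ = f (u • Submodule.Quotient.mk 1) := (f.map_smul u _).symm
        _ = f (Submodule.Quotient.mk u) := by rw [h2]
        _ = f 0 := by rw [h1]
        _ = 0 := f.map_zero
    exact ⟨hmk _ (Submodule.subset_span (Set.mem_insert _ _)),
      hmk _ (Submodule.subset_span (Set.mem_insert_of_mem _ (Set.mem_insert _ _)))⟩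
  -- construction of Φ : M'(1,b₂,c₂) → Hom(M(1,b,c), Λ)
  have hcond1 : ∀ lam : Λ, D.w 1 b c * (v * lam) = 0 := fun lam => by
    rw [← mul_assoc, hwv, zero_mul]
  have hcond2 : ∀ lam : Λ, D.y * D.x * (v * lam) = 0 := fun lam => by
    rw [← mul_assoc, hyx_v, zero_mul]
  have hcond3 : ∀ lam : Λ, D.z * D.x * (v * lam) = 0 := fun lam => by
    rw [← mul_assoc, hzx_v, zero_mul]
  have hΦex : ∃ Φ : D.M' 1 b₂ c₂ →ₗ[Λᵐᵒᵖ] (D.M 1 b c →ₗ[Λ] Λ),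
      ∀ lam a : Λ, Φ (Submodule.Quotient.mk lam) (Submodule.Quotient.mk a)
        = a * (v * lam) := by
    refine ⟨(D.U' 1 b₂ c₂).liftQ
      { toFun := fun lam => homOf D 1 b c (v * lam) (hcond1 lam) (hcond2 lam)
          (hcond3 lam)
        map_add' := ?_
        map_smul' := ?_ } ?_, ?_⟩
    · intro l1 l2
      apply LinearMap.ext; intro m
      obtain ⟨a, rfl⟩ := Submodule.Quotient.mk_surjective _ m
      simp [homOf_apply, mul_add]
    · intro mo l
      apply LinearMap.ext; intro m
      obtain ⟨a, rfl⟩ := Submodule.Quotient.mk_surjective _ m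
      simp only [homOf_apply, LinearMap.smul_apply, RingHom.id_apply,
        MulOpposite.smul_eq_mul_unop, mul_assoc]
    · rw [LambdaAlg.U', Submodule.span_le]
      rintro t ht
      simp only [Set.mem_insert_iff, Set.mem_singleton_iff] at ht
      rcases ht with rfl | rfl | rfl <;>
      · simp only [SetLike.mem_coe, LinearMap.mem_ker, LinearMap.coe_mk, AddHom.coe_mk]
        apply LinearMap.ext; intro m
        obtain ⟨a, rfl⟩ := Submodule.Quotient.mk_surjective _ m
        simp [homOf_apply, hvw₂, hv_yx, hv_zx]
    · intro lam a
      simp [Submodule.liftQ_apply, homOf_apply]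
  obtain ⟨Φ, hΦ⟩ := hΦex
  have hinj : Function.Injective Φ := by
    refine LinearMap.ker_eq_bot.mp (LinearMap.ker_eq_bot'.mpr ?_)
    intro m hm
    obtain ⟨lam, rfl⟩ := Submodule.Quotient.mk_surjective _ m
    have h1 : v * lam = 0 := by
      have h2 := congrArg (fun g => g (Submodule.Quotient.mk (1 : Λ))) hm
      simpa [hΦ] using h2
    exact (Submodule.Quotient.mk_eq_zero _).mpr (memU' lam h1)
  have hsurj : Function.Surjective Φ := by
    intro f
    obtain ⟨hf1, hf2⟩ := constraints f
    obtain ⟨t1, t4, t5, hrepf⟩ := repform _ hf1 hf2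
    refine ⟨Submodule.Quotient.mk (t1 • (1 : Λ) + (-(q⁻¹ * t4)) • D.y
      + (t5 + q⁻¹ * t4 * c₁) • D.z), ?_⟩
    have hvμ : v * (t1 • (1 : Λ) + (-(q⁻¹ * t4)) • D.y + (t5 + q⁻¹ * t4 * c₁) • D.z)
        = t1 • v + t4 • (D.y * D.x) + t5 • (D.z * D.x) := by
      simp only [mul_add, mul_smul_comm, mul_one, hvY, hvZ]
      match_scalars <;> field_simp <;> ring1
    apply LinearMap.ext; intro m
    obtain ⟨a, rfl⟩ := Submodule.Quotient.mk_surjective _ m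
    rw [hΦ, hvμ, ← hrepf]
    exact (evalone f a).symm
  -- construction of F : k³ → Hom(M(1,b,c), Λ), giving the dimension count
  have hcondF1 : ∀ t : Fin 3 → k,
      D.w 1 b c * (t 0 • v + t 1 • (D.y * D.x) + t 2 • (D.z * D.x)) = 0 := fun t => by
    simp only [mul_add, mul_smul_comm, hwv, hw_yx, hw_zx, smul_zero, add_zero]
  have hcondF2 : ∀ t : Fin 3 → k,
      D.y * D.x * (t 0 • v + t 1 • (D.y * D.x) + t 2 • (D.z * D.x)) = 0 := fun t => by
    simp only [mul_add, mul_smul_comm, hyx_v, hyx_yx, hyx_zx, smul_zero, add_zero]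
  have hcondF3 : ∀ t : Fin 3 → k,
      D.z * D.x * (t 0 • v + t 1 • (D.y * D.x) + t 2 • (D.z * D.x)) = 0 := fun t => by
    simp only [mul_add, mul_smul_comm, hzx_v, hzx_yx, hzx_zx, smul_zero, add_zero]
  have hFex : ∃ F : (Fin 3 → k) →ₗ[k] (D.M 1 b c →ₗ[Λ] Λ),
      ∀ (t : Fin 3 → k) (a : Λ), F t (Submodule.Quotient.mk a)
        = a * (t 0 • v + t 1 • (D.y * D.x) + t 2 • (D.z * D.x)) := by
    refine ⟨{ toFun := fun t => homOf D 1 b c _ (hcondF1 t) (hcondF2 t) (hcondF3 t)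
              map_add' := ?_
              map_smul' := ?_ }, ?_⟩
    · intro t s
      apply LinearMap.ext; intro m
      obtain ⟨a, rfl⟩ := Submodule.Quotient.mk_surjective _ m
      simp only [homOf_apply, LinearMap.add_apply, Pi.add_apply]
      rw [← mul_add]
      congr 1
      module
    · intro r t
      apply LinearMap.ext; intro m
      obtain ⟨a, rfl⟩ := Submodule.Quotient.mk_surjective _ m
      simp only [homOf_apply, LinearMap.smul_apply, Pi.smul_apply, smul_eq_mul,
        RingHom.id_apply]
      have hT : (r * t 0) • v + (r * t 1) • (D.y * D.x) + (r * t 2) • (D.z * D.x)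
          = r • (t 0 • v + t 1 • (D.y * D.x) + t 2 • (D.z * D.x)) := by
        module
      rw [hT, mul_smul_comm]
    · intro t a
      simp only [LinearMap.coe_mk, AddHom.coe_mk, homOf_apply]
  obtain ⟨F, hF⟩ := hFex
  have hFinj : Function.Injective F := by
    refine LinearMap.ker_eq_bot.mp (LinearMap.ker_eq_bot'.mpr ?_)
    intro t ht
    have h1 : t 0 • v + t 1 • (D.y * D.x) + t 2 • (D.z * D.x) = 0 := by
      have h2 := congrArg (fun g => g (Submodule.Quotient.mk (1 : Λ))) ht
      simpa [hF] using h2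
    have h1' : (0 : k) • (1 : Λ) + t 0 • D.x + (t 0 * b₁) • D.y + (t 0 * c₁) • D.z
        + t 1 • (D.y * D.x) + t 2 • (D.z * D.x) = 0 := by
      rw [← h1, hv]
      module
    obtain ⟨-, e1, -, -, e4, e5⟩ := D.indep h1'
    funext i
    fin_cases i
    · simpa using e1
    · simpa using e4
    · simpa using e5
  have hFsurj : Function.Surjective F := by
    intro f
    obtain ⟨hf1, hf2⟩ := constraints f
    obtain ⟨t1, t4, t5, hrepf⟩ := repform _ hf1 hf2
    refine ⟨![t1, t4, t5], ?_⟩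
    apply LinearMap.ext; intro m
    obtain ⟨a, rfl⟩ := Submodule.Quotient.mk_surjective _ m
    rw [hF]
    simp only [Matrix.cons_val_zero, Matrix.cons_val_one, Matrix.head_cons]
    have h3 : (![t1, t4, t5] : Fin 3 → k) 2 = t5 := rfl
    rw [h3, ← hrepf]
    exact (evalone f a).symm
  constructor
  · exact ⟨(LinearEquiv.ofBijective Φ ⟨hinj, hsurj⟩).symm⟩
  · have e := LinearEquiv.ofBijective F ⟨hFinj, hFsurj⟩
    rw [← e.finrank_eq]
    exact Module.finrank_fin_fun k

end LambdaAlg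

/-- For all `b, c ∈ k`, the right `Λ`-module `M(1,b,c)* = Hom_Λ(M(1,b,c), Λ)` is
isomorphic to `M′((ω′)²(1,b,c))`; in particular it is 3-dimensional, and
`M(1,−q,c)* ≅ M′(1,−q⁻¹,0)`, `M(1,−q²,c)* ≅ M′(1,−1,0)` for every `c`. -/
theorem statement18 (k : Type) [Field k] (q : k) (hq : q ≠ 0)
    (Λ : Type) [Ring Λ] [Algebra k Λ] (D : LambdaAlg k q Λ) (b c : k) :
    Nonempty ((D.M 1 b c →ₗ[Λ] Λ) ≃ₗ[Λᵐᵒᵖ]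
        D.M' (omegaPrime q (omegaPrime q (1, b, c))).1
          (omegaPrime q (omegaPrime q (1, b, c))).2.1
          (omegaPrime q (omegaPrime q (1, b, c))).2.2)
    ∧ Module.finrank k (D.M 1 b c →ₗ[Λ] Λ) = 3
    ∧ Nonempty ((D.M 1 (-q) c →ₗ[Λ] Λ) ≃ₗ[Λᵐᵒᵖ] D.M' 1 (-q⁻¹) 0)
    ∧ Nonempty ((D.M 1 (-q ^ 2) c →ₗ[Λ] Λ) ≃ₗ[Λᵐᵒᵖ] D.M' 1 (-1) 0) := by
  obtain ⟨h1, h2⟩ := LambdaAlg.master D hq b c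
    (omegaPrime q (omegaPrime q (1, b, c))).2.1
    (omegaPrime q (omegaPrime q (1, b, c))).2.2
    (by simp [omegaPrime]) (by simp [omegaPrime])
  refine ⟨h1, h2, ?_, ?_⟩
  · exact (LambdaAlg.master D hq (-q) c (-q⁻¹) 0
      (by field_simp) (by field_simp; ring)).1
  · exact (LambdaAlg.master D hq (-q ^ 2) c (-1) 0
      (by field_simp) (by field_simp; ring)).1
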